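/- Let G be a group acting translatively on a finite-length simplicial poset P (so that all chains in P have bounded length). If p₁ < p₂ < … < p_k and g₁p₁ < g₂p₂ < … < g_kp_k are two chains in P with g₁, …, g_k ∈ G, then there exists g ∈ G with gp_i = g_ip_i for all i = 1, …, k. -/
import Mathlib


/-- Let `G` act translatively (by order automorphisms) on a finite-length
simplicial poset `P`.  If `p₁ < ⋯ < p_k` and `g₁p₁ < ⋯ < g_kp_k` are two chains in `P`,
then there exists a single `g ∈ G` with `g • pᵢ = gᵢ • pᵢ` for all `i`. -/
theorem translative_chain_regularity
    {G P : Type*} [Group G] [PartialOrder P] [OrderBot P] [MulAction G P]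
    (hact : ∀ (g : G) (x y : P), x ≤ y ↔ g • x ≤ g • y)
    (n : ℕ)
    (hlen : ∀ c : Finset P, IsChain (· ≤ ·) (c : Set P) → c.card ≤ n + 1)
    (hsimp : ∀ p : P, ∃ m : ℕ, Nonempty (Set.Iic p ≃o Finset (Fin m)))
    (htrans : ∀ (p : P) (g : G), (∃ u : P, p ≤ u ∧ g • p ≤ u) → g • p = p)
    (k : ℕ) (p : Fin k → P) (g : Fin k → G)
    (hchain₁ : StrictMono p)
    (hchain₂ : StrictMono (fun i => g i • p i)) :
    ∃ g₀ : G, ∀ i : Fin k, g₀ • p i = g i • p i := by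
  obtain _ | k := k
  · exact ⟨1, fun i => i.elim0⟩
  refine ⟨g (Fin.last k), fun i => ?_⟩
  have h1 : p i ≤ p (Fin.last k) := hchain₁.monotone (Fin.le_last i)
  have h2 : g i • p i ≤ g (Fin.last k) • p (Fin.last k) := hchain₂.monotone (Fin.le_last i)
  have h3 : ((g (Fin.last k))⁻¹ * g i) • p i ≤ p (Fin.last k) := by
    rw [mul_smul]
    rw [hact (g (Fin.last k)), smul_inv_smul]
    exact h2
  have h4 := htrans (p i) ((g (Fin.last k))⁻¹ * g i) ⟨p (Fin.last k), h1, h3⟩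
  calc g (Fin.last k) • p i = g (Fin.last k) • (((g (Fin.last k))⁻¹ * g i) • p i) := by rw [h4]
    _ = g i • p i := by rw [mul_smul, smul_inv_smul]
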